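/- Let $\sigma_1, \sigma_2, \sigma_3$ be positive integers with $\sigma_3 \geq 2$ (ensuring convergence). Then $\sum_{n_1,n_2 \geq 1} \frac{1}{n_1^{\sigma_1} n_2^{\sigma_2} (n_1+n_2)^{\sigma_3}} = \sum_{\substack{r+s = \sigma_1+\sigma_2 \\ r,s \geq 1}} \left( \binom{\sigma_1-1}{r-1} + \binom{\sigma_2-1}{r-1} \right) \zeta(s, r+\sigma_3)$, where $\zeta(s_1,s_2) = \sum_{0 < n < m} \frac{1}{n^{s_1} m^{s_2}}$ is the double zeta value. -/

import Mathlib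

open Finset

/-- Base case: partial fractions for `1/(x^a * y)`. -/
lemma partialFraction_base (x y : ℝ) (hx : 0 < x) (hy : 0 < y) :
    ∀ a : ℕ, 1 ≤ a →
      1 / (x ^ a * y ^ 1) =
        ∑ r ∈ Finset.Icc 1 (a + 1 - 1),
          (((a + 1 - r - 1).choose (1 - 1) : ℝ) / (x ^ r * (x + y) ^ (a + 1 - r)) +
           ((a + 1 - r - 1).choose (a - 1) : ℝ) / (y ^ r * (x + y) ^ (a + 1 - r))) := by
  have hN : 0 < x + y := by linarith
  intro a ha
  induction a with
  | zero => omega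
  | succ a ih =>
    rcases Nat.eq_or_lt_of_le ha with h1 | h1
    · -- a = 0
      have : a = 0 := by omega
      subst this
      norm_num
      field_simp
      ring
    · have ha' : 1 ≤ a := by omega
      have key : 1 / (x ^ (a+1) * y ^ 1) =
          (1 / (x ^ a * y ^ 1)) / (x + y) + 1 / (x ^ (a+1) * (x+y)) := by
        field_simp
        ring
      rw [key, ih ha', Finset.sum_div]
      rw [show a + 1 + 1 - 1 = (a + 1 - 1) + 1 by omega]
      rw [Finset.sum_Icc_succ_top (by omega)]
      congr 1
      · apply Finset.sum_congr rfl
        intro r hr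
        simp only [Finset.mem_Icc] at hr
        rw [add_div, div_div, div_div, mul_assoc, mul_assoc, ← pow_succ]
        have hc : (a + 1 - r - 1).choose (a - 1) = (a + 1 + 1 - r - 1).choose (a + 1 - 1) := by
          rcases Nat.eq_or_lt_of_le hr.1 with h | h
          · subst h; simp [show a + 1 - 1 - 1 = a - 1 by omega, show a + 1 + 1 - 1 - 1 = a by omega,
              Nat.choose_self]
          · rw [Nat.choose_eq_zero_of_lt (by omega), Nat.choose_eq_zero_of_lt (by omega)]
        rw [show a + 1 - r + 1 = a + 1 + 1 - r by omega, hc]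
        norm_num
      · rw [show a + 1 - 1 + 1 = a + 1 by omega,
            show a + 1 + 1 - (a + 1) - 1 = 0 by omega,
            show a + 1 + 1 - (a + 1) = 1 by omega,
            Nat.choose_eq_zero_of_lt (show a + 1 - 1 > 0 by omega)]
        norm_num

lemma partialFraction (x y : ℝ) (hx : 0 < x) (hy : 0 < y) :
    ∀ a b : ℕ, 1 ≤ a → 1 ≤ b →
      1 / (x ^ a * y ^ b) =
        ∑ r ∈ Finset.Icc 1 (a + b - 1),
          (((a + b - r - 1).choose (b - 1) : ℝ) / (x ^ r * (x + y) ^ (a + b - r)) +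
           ((a + b - r - 1).choose (a - 1) : ℝ) / (y ^ r * (x + y) ^ (a + b - r))) := by
  have hN : 0 < x + y := by linarith
  suffices H : ∀ n a b, a + b = n → 1 ≤ a → 1 ≤ b →
      1 / (x ^ a * y ^ b) =
        ∑ r ∈ Finset.Icc 1 (a + b - 1),
          (((a + b - r - 1).choose (b - 1) : ℝ) / (x ^ r * (x + y) ^ (a + b - r)) +
           ((a + b - r - 1).choose (a - 1) : ℝ) / (y ^ r * (x + y) ^ (a + b - r))) by
    exact fun a b ha hb => H (a + b) a b rfl ha hb
  intro n
  induction n using Nat.strong_induction_on with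
  | _ n IH =>
  intro a b hab ha hb
  rcases Nat.eq_or_lt_of_le hb with hb1 | hb2
  · -- b = 1
    have : b = 1 := hb1.symm
    subst this
    exact partialFraction_base x y hx hy a ha
  rcases Nat.eq_or_lt_of_le ha with ha1 | ha2
  · -- a = 1
    have : a = 1 := ha1.symm
    subst this
    have base := partialFraction_base y x hy hx b hb
    rw [mul_comm, base]
    apply Finset.sum_congr (by rw [show 1 + b = b + 1 by omega])
    intro r hr
    simp only [Finset.mem_Icc] at hr
    rw [add_comm ((((b + 1 - r - 1).choose (1 - 1)) : ℝ) / (y ^ r * (y + x) ^ (b + 1 - r)))]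
    rw [add_comm y x, show b + 1 - r - 1 = 1 + b - r - 1 by omega,
        show b + 1 - r = 1 + b - r by omega]
  · -- a, b ≥ 2
    obtain ⟨a', rfl⟩ : ∃ a', a = a' + 1 := ⟨a - 1, by omega⟩
    obtain ⟨b', rfl⟩ : ∃ b', b = b' + 1 := ⟨b - 1, by omega⟩
    have ha' : 1 ≤ a' := by omega
    have hb' : 1 ≤ b' := by omega
    have key : 1 / (x ^ (a' + 1) * y ^ (b' + 1)) =
        (1 / (x ^ a' * y ^ (b' + 1))) / (x + y) + (1 / (x ^ (a' + 1) * y ^ b')) / (x + y) := by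
      field_simp
      ring
    have IH1 := IH (n - 1) (by omega) a' (b' + 1) (by omega) ha' hb
    have IH2 := IH (n - 1) (by omega) (a' + 1) b' (by omega) ha hb'
    rw [key, IH1, IH2, Finset.sum_div, Finset.sum_div,
        show a' + (b' + 1) - 1 = a' + b' by omega,
        show a' + 1 + b' - 1 = a' + b' by omega,
        ← Finset.sum_add_distrib,
        show a' + 1 + (b' + 1) - 1 = (a' + b') + 1 by omega,
        Finset.sum_Icc_succ_top (by omega)]
    rw [show a' + 1 + (b' + 1) - (a' + b' + 1) - 1 = 0 by omega,
        Nat.choose_eq_zero_of_lt (show 0 < b' + 1 - 1 by omega),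
        Nat.choose_eq_zero_of_lt (show 0 < a' + 1 - 1 by omega)]
    norm_num
    apply Finset.sum_congr rfl
    intro r hr
    simp only [Finset.mem_Icc] at hr
    rw [add_div, add_div, div_div, div_div, div_div, div_div,
        mul_assoc, mul_assoc, mul_assoc, mul_assoc, ← pow_succ, ← pow_succ]
    rw [show a' + (b' + 1) - r + 1 = a' + 1 + (b' + 1) - r by omega,
        show a' + 1 + b' - r + 1 = a' + 1 + (b' + 1) - r by omega]
    rw [add_add_add_comm, ← add_div, ← add_div, ← Nat.cast_add, ← Nat.cast_add]
    have e1 : (a' + (b' + 1) - r - 1).choose b' + (a' + 1 + b' - r - 1).choose (b' - 1)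
        = (a' + 1 + (b' + 1) - r - 1).choose b' := by
      have h := Nat.choose_succ_succ (a' + b' - r) (b' - 1)
      simp only [Nat.succ_eq_add_one] at h
      rw [show b' - 1 + 1 = b' by omega] at h
      rw [show a' + (b' + 1) - r - 1 = a' + b' - r by omega,
          show a' + 1 + b' - r - 1 = a' + b' - r by omega,
          show a' + 1 + (b' + 1) - r - 1 = (a' + b' - r) + 1 by omega,
          h, add_comm]
    have e2 : (a' + (b' + 1) - r - 1).choose (a' - 1) + (a' + 1 + b' - r - 1).choose a'
        = (a' + 1 + (b' + 1) - r - 1).choose a' := by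
      have h := Nat.choose_succ_succ (a' + b' - r) (a' - 1)
      simp only [Nat.succ_eq_add_one] at h
      rw [show a' - 1 + 1 = a' by omega] at h
      rw [show a' + (b' + 1) - r - 1 = a' + b' - r by omega,
          show a' + 1 + b' - r - 1 = a' + b' - r by omega,
          show a' + 1 + (b' + 1) - r - 1 = (a' + b' - r) + 1 by omega,
          h]
    rw [e1, e2]


/-- The double zeta value `ζ(a, b) = ∑_{0 < n < m} n⁻ᵃ m⁻ᵇ`, parametrized by `n = p.1`,
`m = p.1 + p.2` for pairs of positive integers. -/
noncomputable def doubleZeta (a b : ℕ) : ℝ :=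
  ∑' p : ℕ+ × ℕ+, 1 / (((p.1 : ℕ) : ℝ) ^ a * (((p.1 : ℕ) : ℝ) + ((p.2 : ℕ) : ℝ)) ^ b)


set_option maxHeartbeats 1000000 in
lemma summable_aux (a b : ℕ) (ha : 1 ≤ a) (hb : 3 ≤ b) :
    Summable (fun p : ℕ+ × ℕ+ =>
      1 / (((p.1 : ℕ) : ℝ) ^ a * (((p.1 : ℕ) : ℝ) + ((p.2 : ℕ) : ℝ)) ^ b)) := by
  have hsq : Summable (fun n : ℕ+ => 1 / ((n : ℕ) : ℝ) ^ 2) := by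
    have h2 : Summable (fun n : ℕ => 1 / (n : ℝ) ^ 2) :=
      Real.summable_one_div_nat_pow.mpr one_lt_two
    exact h2.comp_injective (fun m n h => PNat.coe_injective h)
  have hprod : Summable (fun p : ℕ+ × ℕ+ =>
      (1 / ((p.1 : ℕ) : ℝ) ^ 2) * (1 / ((p.2 : ℕ) : ℝ) ^ 2)) :=
    hsq.mul_of_nonneg hsq (fun n => by positivity) (fun n => by positivity)
  apply Summable.of_nonneg_of_le (fun p => by positivity) _ hprod
  intro p
  have hx1 : (1 : ℝ) ≤ ((p.1 : ℕ) : ℝ) := by exact_mod_cast p.1.one_le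
  have hy1 : (1 : ℝ) ≤ ((p.2 : ℕ) : ℝ) := by exact_mod_cast p.2.one_le
  set x : ℝ := ((p.1 : ℕ) : ℝ) with hxdef
  set y : ℝ := ((p.2 : ℕ) : ℝ) with hydef
  rw [one_div_mul_one_div]
  apply one_div_le_one_div_of_le (by positivity)
  calc x ^ 2 * y ^ 2 ≤ x ^ 1 * (x + y) ^ 3 := by
        rw [pow_one]
        have hx0 : (0:ℝ) ≤ x := by linarith
        have hy0 : (0:ℝ) ≤ y := by linarith
        nlinarith [mul_nonneg (mul_nonneg hx0 hx0) hy0, sq_nonneg (x*y),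
          mul_nonneg hx0 hy0, sq_nonneg x, sq_nonneg y,
          mul_nonneg (mul_nonneg hx0 hy0) hy0]
    _ ≤ x ^ a * (x + y) ^ b :=
        mul_le_mul (pow_le_pow_right₀ hx1 ha) (pow_le_pow_right₀ (by linarith) hb)
          (by positivity) (by positivity)

lemma tsum_swap_eq (a b : ℕ) :
    (∑' p : ℕ+ × ℕ+, 1 / (((p.2 : ℕ) : ℝ) ^ a * (((p.1 : ℕ) : ℝ) + ((p.2 : ℕ) : ℝ)) ^ b))
      = doubleZeta a b := by
  rw [doubleZeta, ← (Equiv.prodComm ℕ+ ℕ+).tsum_eq]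
  exact tsum_congr fun p => by simp [Equiv.prodComm_apply, add_comm]

/-- Example 4.4: the Mordell–Tornheim double sum `T(σ₁, σ₂; σ₃)` equals
`∑_{r+s=σ₁+σ₂, r,s≥1} (C(r-1,σ₁-1) + C(r-1,σ₂-1)) ζ(s, r+σ₃)`. -/
theorem mordellTornheim_eq_doubleZeta_comb (σ₁ σ₂ σ₃ : ℕ)
    (h1 : 1 ≤ σ₁) (h2 : 1 ≤ σ₂) (h3 : 2 ≤ σ₃) :
    (∑' n : ℕ+ × ℕ+,
        1 / (((n.1 : ℕ) : ℝ) ^ σ₁ * ((n.2 : ℕ) : ℝ) ^ σ₂ *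
              (((n.1 : ℕ) : ℝ) + ((n.2 : ℕ) : ℝ)) ^ σ₃)) =
      ∑ r ∈ Finset.Icc 1 (σ₁ + σ₂ - 1),
        ((Nat.choose (r - 1) (σ₁ - 1) : ℝ) + (Nat.choose (r - 1) (σ₂ - 1) : ℝ)) *
          doubleZeta (σ₁ + σ₂ - r) (r + σ₃) := by
  have point : ∀ p : ℕ+ × ℕ+,
      1 / (((p.1 : ℕ) : ℝ) ^ σ₁ * ((p.2 : ℕ) : ℝ) ^ σ₂ *
            (((p.1 : ℕ) : ℝ) + ((p.2 : ℕ) : ℝ)) ^ σ₃)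
        = ∑ r ∈ Finset.Icc 1 (σ₁ + σ₂ - 1),
            (((σ₁ + σ₂ - r - 1).choose (σ₂ - 1) : ℝ) /
               (((p.1 : ℕ) : ℝ) ^ r *
                 (((p.1 : ℕ) : ℝ) + ((p.2 : ℕ) : ℝ)) ^ (σ₁ + σ₂ - r + σ₃)) +
             ((σ₁ + σ₂ - r - 1).choose (σ₁ - 1) : ℝ) /
               (((p.2 : ℕ) : ℝ) ^ r *
                 (((p.1 : ℕ) : ℝ) + ((p.2 : ℕ) : ℝ)) ^ (σ₁ + σ₂ - r + σ₃))) := by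
    intro p
    have hx : (0:ℝ) < ((p.1 : ℕ) : ℝ) := by exact_mod_cast p.1.pos
    have hy : (0:ℝ) < ((p.2 : ℕ) : ℝ) := by exact_mod_cast p.2.pos
    set x : ℝ := ((p.1 : ℕ) : ℝ)
    set y : ℝ := ((p.2 : ℕ) : ℝ)
    rw [show (1:ℝ) / (x ^ σ₁ * y ^ σ₂ * (x+y) ^ σ₃)
        = (1 / (x ^ σ₁ * y ^ σ₂)) * (1 / (x+y) ^ σ₃) by rw [one_div_mul_one_div]]
    rw [partialFraction x y hx hy σ₁ σ₂ h1 h2, Finset.sum_mul]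
    apply Finset.sum_congr rfl
    intro r hr
    rw [pow_add, add_mul, div_mul_div_comm, div_mul_div_comm, mul_one, mul_one,
        mul_assoc, mul_assoc]
  have hS : ∀ r ∈ Finset.Icc 1 (σ₁ + σ₂ - 1), Summable (fun p : ℕ+ × ℕ+ =>
      ((σ₁ + σ₂ - r - 1).choose (σ₂ - 1) : ℝ) /
        (((p.1 : ℕ) : ℝ) ^ r *
          (((p.1 : ℕ) : ℝ) + ((p.2 : ℕ) : ℝ)) ^ (σ₁ + σ₂ - r + σ₃)) +
      ((σ₁ + σ₂ - r - 1).choose (σ₁ - 1) : ℝ) /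
        (((p.2 : ℕ) : ℝ) ^ r *
          (((p.1 : ℕ) : ℝ) + ((p.2 : ℕ) : ℝ)) ^ (σ₁ + σ₂ - r + σ₃))) := by
    intro r hr
    simp only [Finset.mem_Icc] at hr
    have he : 3 ≤ σ₁ + σ₂ - r + σ₃ := by omega
    have S1 := summable_aux r _ hr.1 he
    have S2 : Summable (fun p : ℕ+ × ℕ+ =>
        1 / (((p.2 : ℕ) : ℝ) ^ r *
          (((p.1 : ℕ) : ℝ) + ((p.2 : ℕ) : ℝ)) ^ (σ₁ + σ₂ - r + σ₃))) := by
      have h := (summable_aux r _ hr.1 he).comp_injective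
        (Equiv.prodComm ℕ+ ℕ+).injective
      exact h.congr fun p => by
        simp only [Function.comp_apply, Equiv.prodComm_apply, Prod.fst_swap, Prod.snd_swap]
        rw [add_comm (((p.2 : ℕ) : ℝ))]
    have S1' := (S1.mul_left (((σ₁ + σ₂ - r - 1).choose (σ₂ - 1) : ℝ)))
    have S2' := (S2.mul_left (((σ₁ + σ₂ - r - 1).choose (σ₁ - 1) : ℝ)))
    simp only [mul_one_div] at S1' S2'
    exact S1'.add S2'
  have term_eq : ∀ r ∈ Finset.Icc 1 (σ₁ + σ₂ - 1),
      (∑' p : ℕ+ × ℕ+,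
        (((σ₁ + σ₂ - r - 1).choose (σ₂ - 1) : ℝ) /
          (((p.1 : ℕ) : ℝ) ^ r *
            (((p.1 : ℕ) : ℝ) + ((p.2 : ℕ) : ℝ)) ^ (σ₁ + σ₂ - r + σ₃)) +
         ((σ₁ + σ₂ - r - 1).choose (σ₁ - 1) : ℝ) /
          (((p.2 : ℕ) : ℝ) ^ r *
            (((p.1 : ℕ) : ℝ) + ((p.2 : ℕ) : ℝ)) ^ (σ₁ + σ₂ - r + σ₃))))
      = (((σ₁ + σ₂ - r - 1).choose (σ₂ - 1) : ℝ) + ((σ₁ + σ₂ - r - 1).choose (σ₁ - 1) : ℝ)) *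
          doubleZeta r (σ₁ + σ₂ - r + σ₃) := by
    intro r hr
    simp only [Finset.mem_Icc] at hr
    have he : 3 ≤ σ₁ + σ₂ - r + σ₃ := by omega
    have S1 := summable_aux r _ hr.1 he
    have S2 : Summable (fun p : ℕ+ × ℕ+ =>
        1 / (((p.2 : ℕ) : ℝ) ^ r *
          (((p.1 : ℕ) : ℝ) + ((p.2 : ℕ) : ℝ)) ^ (σ₁ + σ₂ - r + σ₃))) := by
      have h := (summable_aux r _ hr.1 he).comp_injective
        (Equiv.prodComm ℕ+ ℕ+).injective
      exact h.congr fun p => by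
        simp only [Function.comp_apply, Equiv.prodComm_apply, Prod.fst_swap, Prod.snd_swap]
        rw [add_comm (((p.2 : ℕ) : ℝ))]
    have S1' := (S1.mul_left (((σ₁ + σ₂ - r - 1).choose (σ₂ - 1) : ℝ)))
    have S2' := (S2.mul_left (((σ₁ + σ₂ - r - 1).choose (σ₁ - 1) : ℝ)))
    simp only [mul_one_div] at S1' S2'
    rw [Summable.tsum_add S1' S2']
    simp only [div_eq_mul_one_div (((σ₁ + σ₂ - r - 1).choose (σ₂ - 1) : ℝ)),
      div_eq_mul_one_div (((σ₁ + σ₂ - r - 1).choose (σ₁ - 1) : ℝ))]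
    rw [tsum_mul_left, tsum_mul_left, tsum_swap_eq]
    rw [show (∑' p : ℕ+ × ℕ+, 1 / (((p.1 : ℕ) : ℝ) ^ r *
          (((p.1 : ℕ) : ℝ) + ((p.2 : ℕ) : ℝ)) ^ (σ₁ + σ₂ - r + σ₃)))
        = doubleZeta r (σ₁ + σ₂ - r + σ₃) from rfl]
    ring
  rw [tsum_congr point, Summable.tsum_finsetSum hS, Finset.sum_congr rfl term_eq]
  apply Finset.sum_nbij' (i := fun u => σ₁ + σ₂ - u) (j := fun r => σ₁ + σ₂ - r)
  · intro u hu; simp only [Finset.mem_Icc] at *; omega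
  · intro u hu; simp only [Finset.mem_Icc] at *; omega
  · intro u hu; simp only [Finset.mem_Icc] at hu; omega
  · intro u hu; simp only [Finset.mem_Icc] at hu; omega
  · intro u hu
    simp only [Finset.mem_Icc] at hu
    rw [show σ₁ + σ₂ - u - 1 = σ₁ + σ₂ - u - 1 from rfl,
        show σ₁ + σ₂ - (σ₁ + σ₂ - u) = u by omega,
        show σ₁ + σ₂ - u - 1 = σ₁ + σ₂ - u - 1 from rfl]
    ring
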